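/- Let m, k, N be positive integers and let E = {v_1,…,v_N} ⊂ R^m be a set of nonzero vectors no two of which are collinear. Suppose 1/p_j ∈ [0,1], λ_j ∈ R, and there is a finite constant C such that Λ(f_1,…,f_N) ≤ C Π_{j=1}^N ‖f_j‖_{L^{p_j}_{λ_j}(R^k)} for all nonnegative measurable f_1,…,f_N on R^k. Then Σ_{j=1}^N (1/p_j + λ_j/k) = m. -/

import Mathlib

open MeasureTheory ENNReal
open scoped Classical

/-- The dot product `v · x ∈ ℝᵏ` for `v ∈ ℝᵐ` and `x ∈ (ℝᵏ)ᵐ`. -/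
noncomputable def dotv {m k : ℕ} (v : Fin m → ℝ)
    (x : Fin m → EuclideanSpace ℝ (Fin k)) : EuclideanSpace ℝ (Fin k) :=
  ∑ i, v i • x i

/-- The Brascamp–Lieb form `Λ(f₁,…,f_N) = ∫ ∏ f_j(v_j · x) dx`. -/
noncomputable def BLform {m k N : ℕ} (v : Fin N → Fin m → ℝ)
    (f : Fin N → EuclideanSpace ℝ (Fin k) → ℝ≥0∞) : ℝ≥0∞ :=
  ∫⁻ x : Fin m → EuclideanSpace ℝ (Fin k), ∏ j, f j (dotv (v j) x)

/-- The weighted norm `‖f‖_{L^p_α} = ‖ |·|^α f ‖_{L^p}`. -/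
noncomputable def wnorm {k : ℕ} (p α : ℝ)
    (f : EuclideanSpace ℝ (Fin k) → ℝ≥0∞) : ℝ≥0∞ :=
  (∫⁻ y : EuclideanSpace ℝ (Fin k), ((‖y‖₊ : ℝ≥0∞) ^ α * f y) ^ p) ^ (1 / p)

/-- A family of vectors in `ℝᵐ` is generic if every subfamily of cardinality `m`
is a basis of `ℝᵐ`. -/
def IsGeneric {m N : ℕ} (v : Fin N → Fin m → ℝ) : Prop :=
  ∀ s : Finset (Fin N), s.card = m →
    LinearIndependent ℝ (fun i : s => v i.1) ∧
      Submodule.span ℝ (v '' ↑s) = ⊤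

/-! ### Auxiliary lemmas -/

instance piHaar (m k : ℕ) :
    (volume : Measure (Fin m → EuclideanSpace ℝ (Fin k))).IsAddHaarMeasure :=
  MeasureTheory.Measure.pi.isAddHaarMeasure _

lemma continuous_dotv {m k : ℕ} (v : Fin m → ℝ) :
    Continuous fun x : Fin m → EuclideanSpace ℝ (Fin k) => dotv v x := by
  unfold dotv
  exact continuous_finset_sum _ fun i _ => (continuous_apply i).const_smul (v i)

lemma measurable_dotv {m k : ℕ} (v : Fin m → ℝ) :
    Measurable fun x : Fin m → EuclideanSpace ℝ (Fin k) => dotv v x :=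
  (continuous_dotv v).measurable

lemma dotv_smul {m k : ℕ} (v : Fin m → ℝ) (t : ℝ)
    (x : Fin m → EuclideanSpace ℝ (Fin k)) :
    dotv v (t • x) = t • dotv v x := by
  simp only [dotv, Finset.smul_sum, Pi.smul_apply]
  exact Finset.sum_congr rfl fun i _ => smul_comm (v i) t (x i)

/-- Scaling of a Lebesgue integral under dilation on a finite-dimensional space. -/
lemma lintegral_comp_smul_haar {E : Type*} [NormedAddCommGroup E] [NormedSpace ℝ E]
    [MeasurableSpace E] [BorelSpace E] [FiniteDimensional ℝ E]
    (μ : Measure E) [μ.IsAddHaarMeasure] {g : E → ℝ≥0∞} (hg : Measurable g)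
    {t : ℝ} (ht : t ≠ 0) :
    ∫⁻ x, g (t • x) ∂μ = ENNReal.ofReal |(t ^ Module.finrank ℝ E)|⁻¹ * ∫⁻ x, g x ∂μ := by
  have : ∫⁻ x, g (t • x) ∂μ = ∫⁻ y, g y ∂(Measure.map (t • ·) μ) :=
    (lintegral_map hg (measurable_const_smul t)).symm
  rw [this, Measure.map_addHaar_smul μ ht, lintegral_smul_measure, abs_inv, smul_eq_mul]

lemma ofReal_inv_pow_eq {t : ℝ} (ht : 0 < t) (d : ℕ) :
    ENNReal.ofReal |(t ^ d)|⁻¹ = (ENNReal.ofReal t) ^ (-(d : ℝ)) := by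
  rw [abs_of_pos (pow_pos ht d), ENNReal.ofReal_inv_of_pos (pow_pos ht d),
    ENNReal.ofReal_pow ht.le, ← ENNReal.rpow_natCast, ← ENNReal.rpow_neg]

lemma ennreal_rpow_ne_top {x : ℝ≥0∞} (h0 : x ≠ 0) (ht : x ≠ ⊤) (q : ℝ) : x ^ q ≠ ⊤ := by
  rcases le_or_gt 0 q with hq | hq
  · exact ENNReal.rpow_ne_top_of_nonneg hq ht
  · rw [← neg_neg q, ENNReal.rpow_neg, ENNReal.inv_ne_top]
    exact (ENNReal.rpow_pos (pos_iff_ne_zero.mpr h0) ht).ne'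

lemma ennreal_rpow_ne_zero {x : ℝ≥0∞} (h0 : x ≠ 0) (ht : x ≠ ⊤) (q : ℝ) : x ^ q ≠ 0 :=
  (ENNReal.rpow_pos (pos_iff_ne_zero.mpr h0) ht).ne'

lemma ennreal_rpow_sum {ι : Type*} (s : Finset ι) {T : ℝ≥0∞} (hT0 : T ≠ 0) (hTt : T ≠ ⊤)
    (e : ι → ℝ) : T ^ (∑ j ∈ s, e j) = ∏ j ∈ s, T ^ (e j) := by
  induction s using Finset.cons_induction with
  | empty => simp
  | cons a s ha ih => rw [Finset.sum_cons, Finset.prod_cons, ENNReal.rpow_add _ _ hT0 hTt, ih]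

lemma ennreal_rpow_bounds {A B x : ℝ≥0∞} (hA : A ≠ 0) (hB : B ≠ ⊤)
    (h1 : A ≤ x) (h2 : x ≤ B) (q : ℝ) :
    A ^ q ⊓ B ^ q ≤ x ^ q ∧ x ^ q ≤ A ^ q ⊔ B ^ q := by
  rcases le_or_gt 0 q with hq | hq
  · exact ⟨inf_le_left.trans (ENNReal.rpow_le_rpow h1 hq),
      (ENNReal.rpow_le_rpow h2 hq).trans le_sup_right⟩
  · have hxA : A ^ (-q) ≤ x ^ (-q) := ENNReal.rpow_le_rpow h1 (by linarith)
    have hxB : x ^ (-q) ≤ B ^ (-q) := ENNReal.rpow_le_rpow h2 (by linarith)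
    have e1 : x ^ q = (x ^ (-q))⁻¹ := by rw [← ENNReal.rpow_neg, neg_neg]
    have e2 : A ^ q = (A ^ (-q))⁻¹ := by rw [← ENNReal.rpow_neg, neg_neg]
    have e3 : B ^ q = (B ^ (-q))⁻¹ := by rw [← ENNReal.rpow_neg, neg_neg]
    rw [e1, e2, e3]
    exact ⟨inf_le_right.trans (ENNReal.inv_le_inv.mpr hxB),
      (ENNReal.inv_le_inv.mpr hxA).trans le_sup_left⟩

lemma BLform_scale {m k N : ℕ} (v : Fin N → Fin m → ℝ)
    (f : Fin N → EuclideanSpace ℝ (Fin k) → ℝ≥0∞) (hf : ∀ j, Measurable (f j))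
    {t : ℝ} (ht : 0 < t) :
    BLform v (fun j y => f j (t • y)) =
      (ENNReal.ofReal t) ^ (-((m * k : ℕ) : ℝ)) * BLform v f := by
  have hG : Measurable fun x : Fin m → EuclideanSpace ℝ (Fin k) => ∏ j, f j (dotv (v j) x) :=
    Finset.measurable_prod _ fun j _ => (hf j).comp (measurable_dotv (v j))
  have hfr : Module.finrank ℝ (Fin m → EuclideanSpace ℝ (Fin k)) = m * k := by
    rw [Module.finrank_pi_fintype]; simp [mul_comm]
  have key : BLform v (fun j y => f j (t • y))
      = ∫⁻ x : Fin m → EuclideanSpace ℝ (Fin k), ∏ j, f j (dotv (v j) (t • x)) := by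
    unfold BLform
    exact lintegral_congr fun x => Finset.prod_congr rfl fun j _ => by rw [dotv_smul]
  have := lintegral_comp_smul_haar (volume : Measure (Fin m → EuclideanSpace ℝ (Fin k)))
    hG ht.ne'
  rw [key]
  calc ∫⁻ x : Fin m → EuclideanSpace ℝ (Fin k), ∏ j, f j (dotv (v j) (t • x))
      = ∫⁻ x : Fin m → EuclideanSpace ℝ (Fin k),
          (fun z => ∏ j, f j (dotv (v j) z)) (t • x) := rfl
    _ = ENNReal.ofReal |(t ^ Module.finrank ℝ (Fin m → EuclideanSpace ℝ (Fin k)))|⁻¹ *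
          ∫⁻ x, ∏ j, f j (dotv (v j) x) := this
    _ = (ENNReal.ofReal t) ^ (-((m * k : ℕ) : ℝ)) * BLform v f := by
          rw [hfr, ofReal_inv_pow_eq ht]; rfl

lemma wnorm_scale {k : ℕ} {p lam : ℝ} (hp : 1 ≤ p) {f : EuclideanSpace ℝ (Fin k) → ℝ≥0∞}
    (hf : Measurable f) {t : ℝ} (ht : 0 < t) :
    wnorm p lam (fun y => f (t • y)) =
      (ENNReal.ofReal t) ^ (-(lam + (k : ℝ) / p)) * wnorm p lam f := by
  set T := ENNReal.ofReal t with hT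
  have hT0 : T ≠ 0 := by simp [hT, ENNReal.ofReal_eq_zero, not_le, ht]
  have hTt : T ≠ ⊤ := ENNReal.ofReal_ne_top
  have hp0 : (0:ℝ) < p := lt_of_lt_of_le one_pos hp
  have hTl0 : T ^ lam ≠ 0 := ennreal_rpow_ne_zero hT0 hTt lam
  have hTlt : T ^ lam ≠ ⊤ := ennreal_rpow_ne_top hT0 hTt lam
  have key : ∀ y : EuclideanSpace ℝ (Fin k),
      ((‖y‖₊ : ℝ≥0∞) ^ lam * f (t • y)) ^ p
        = ((T ^ lam)⁻¹) ^ p * (((‖t • y‖₊ : ℝ≥0∞)) ^ lam * f (t • y)) ^ p := by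
    intro y
    have hnorm : ((‖t • y‖₊ : ℝ≥0∞)) = T * (‖y‖₊ : ℝ≥0∞) := by
      rw [nnnorm_smul, ENNReal.coe_mul, hT]
      congr 1
      rw [← enorm_eq_nnnorm, ← ofReal_norm, Real.norm_eq_abs, abs_of_pos ht]
    rw [hnorm, ENNReal.mul_rpow_of_ne_top hTt ENNReal.coe_ne_top,
      mul_assoc (T ^ lam), ENNReal.mul_rpow_of_nonneg (T ^ lam) _ hp0.le, ← mul_assoc,
      ← ENNReal.mul_rpow_of_nonneg ((T ^ lam)⁻¹) (T ^ lam) hp0.le,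
      ENNReal.inv_mul_cancel hTl0 hTlt, ENNReal.one_rpow, one_mul]
  have hH : Measurable fun y : EuclideanSpace ℝ (Fin k) => ((‖y‖₊ : ℝ≥0∞) ^ lam * f y) ^ p := by
    fun_prop
  have hc_ne_top : ((T ^ lam)⁻¹) ^ p ≠ ⊤ :=
    ennreal_rpow_ne_top (by simpa using hTlt) (by simpa using hTl0) p
  unfold wnorm
  simp only [key]
  rw [lintegral_const_mul' _ _ hc_ne_top]
  have hscale : (∫⁻ y : EuclideanSpace ℝ (Fin k), ((‖t • y‖₊ : ℝ≥0∞) ^ lam * f (t • y)) ^ p)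
      = T ^ (-(k:ℝ)) * ∫⁻ y : EuclideanSpace ℝ (Fin k), ((‖y‖₊ : ℝ≥0∞) ^ lam * f y) ^ p := by
    have := lintegral_comp_smul_haar (volume : Measure (EuclideanSpace ℝ (Fin k))) hH ht.ne'
    rw [show (∫⁻ y : EuclideanSpace ℝ (Fin k), ((‖t • y‖₊ : ℝ≥0∞) ^ lam * f (t • y)) ^ p)
        = ∫⁻ y : EuclideanSpace ℝ (Fin k),
            (fun z => ((‖z‖₊ : ℝ≥0∞) ^ lam * f z) ^ p) (t • y) from rfl, this,
      finrank_euclideanSpace_fin, ofReal_inv_pow_eq ht]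
  rw [hscale]
  set I := ∫⁻ y : EuclideanSpace ℝ (Fin k), ((‖y‖₊ : ℝ≥0∞) ^ lam * f y) ^ p with hI
  rw [← mul_assoc, ENNReal.mul_rpow_of_nonneg _ _ (by positivity : (0:ℝ) ≤ 1/p),
    ENNReal.mul_rpow_of_nonneg _ _ (by positivity : (0:ℝ) ≤ 1/p)]
  congr 1
  rw [← ENNReal.rpow_neg, ← ENNReal.rpow_mul, ← ENNReal.rpow_mul, ← ENNReal.rpow_mul,
    ← ENNReal.rpow_add _ _ hT0 hTt]
  congr 1
  field_simp
  ring

/-- If `L ≤ B * t ^ a` for all positive `t`, with `L > 0`, then `a = 0`. -/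
lemma exponent_eq_zero {a L B : ℝ} (hL : 0 < L) (hB : 0 ≤ B)
    (h : ∀ t : ℝ, 0 < t → L ≤ B * t ^ a) : a = 0 := by
  by_contra ha
  set x := L / (2 * (B + 1)) with hxdef
  have hx0 : 0 < x := by positivity
  have h1 := h (x ^ (1 / a)) (Real.rpow_pos_of_pos hx0 _)
  rw [← Real.rpow_mul hx0.le, one_div_mul_cancel ha, Real.rpow_one] at h1
  have hD : (0:ℝ) < 2 * (B + 1) := by linarith
  rw [hxdef, mul_div_assoc'] at h1
  rw [le_div_iff₀ hD] at h1
  nlinarith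

lemma wnorm_p_zero {k : ℕ} (α : ℝ) (f : EuclideanSpace ℝ (Fin k) → ℝ≥0∞) :
    wnorm 0 α f = 1 := by
  unfold wnorm
  simp

/-- For the indicator of a ball away from the origin, the weighted norm is
finite and nonzero. -/
lemma wnorm_indicator_bounds {k : ℕ} {pj lamj : ℝ} (hpj : 1 ≤ pj)
    {c : EuclideanSpace ℝ (Fin k)} {r : ℝ} (hr : 0 < r) (hrc : 2 * r ≤ ‖c‖) :
    wnorm pj lamj ((Metric.closedBall c r).indicator fun _ => (1:ℝ≥0∞)) ≠ 0 ∧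
      wnorm pj lamj ((Metric.closedBall c r).indicator fun _ => (1:ℝ≥0∞)) ≠ ⊤ := by
  have hp0 : (0:ℝ) < pj := lt_of_lt_of_le one_pos hpj
  have hc : 0 < ‖c‖ := lt_of_lt_of_le (by linarith) hrc
  set B := Metric.closedBall c r with hB
  set q := lamj * pj with hq
  set A : ℝ≥0∞ := ENNReal.ofReal (‖c‖ / 2) with hA
  set Bb : ℝ≥0∞ := ENNReal.ofReal (2 * ‖c‖) with hBb
  have hA0 : A ≠ 0 := by
    simp only [hA, Ne, ENNReal.ofReal_eq_zero, not_le]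
    linarith
  have hAt : A ≠ ⊤ := ENNReal.ofReal_ne_top
  have hBb0 : Bb ≠ 0 := by
    simp only [hBb, Ne, ENNReal.ofReal_eq_zero, not_le]
    linarith
  have hBbt : Bb ≠ ⊤ := ENNReal.ofReal_ne_top
  -- norm bounds on the ball
  have hmem : ∀ y ∈ B, A ≤ (‖y‖₊ : ℝ≥0∞) ∧ (‖y‖₊ : ℝ≥0∞) ≤ Bb := by
    intro y hy
    have hdist : ‖y - c‖ ≤ r := by
      rw [← dist_eq_norm]; exact Metric.mem_closedBall.mp hy
    have habs := abs_norm_sub_norm_le y c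
    have h1 : ‖c‖ / 2 ≤ ‖y‖ := by
      have := abs_le.mp (habs.trans hdist)
      linarith [this.1]
    have h2 : ‖y‖ ≤ 2 * ‖c‖ := by
      have := abs_le.mp (habs.trans hdist)
      linarith [this.2]
    rw [← enorm_eq_nnnorm, ← ofReal_norm]
    exact ⟨ENNReal.ofReal_le_ofReal h1, ENNReal.ofReal_le_ofReal h2⟩
  -- pointwise computation of the integrand
  have hpoint : ∀ y : EuclideanSpace ℝ (Fin k),
      ((‖y‖₊ : ℝ≥0∞) ^ lamj * B.indicator (fun _ => (1:ℝ≥0∞)) y) ^ pj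
        = B.indicator (fun y => (‖y‖₊ : ℝ≥0∞) ^ q) y := by
    intro y
    by_cases hy : y ∈ B
    · rw [Set.indicator_of_mem hy, Set.indicator_of_mem hy, mul_one, hq,
        ENNReal.rpow_mul]
    · rw [Set.indicator_of_notMem hy, Set.indicator_of_notMem hy, mul_zero,
        ENNReal.zero_rpow_of_pos hp0]
  set I := ∫⁻ y : EuclideanSpace ℝ (Fin k),
      ((‖y‖₊ : ℝ≥0∞) ^ lamj * B.indicator (fun _ => (1:ℝ≥0∞)) y) ^ pj with hI
  have hIeq : I = ∫⁻ y, B.indicator (fun y => (‖y‖₊ : ℝ≥0∞) ^ q) y := by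
    rw [hI]; exact lintegral_congr hpoint
  have hvolpos : 0 < volume B := by
    exact lt_of_lt_of_le (Metric.measure_ball_pos volume c hr)
      (measure_mono Metric.ball_subset_closedBall)
  have hvoltop : volume B < ⊤ := measure_closedBall_lt_top
  have hupper : I ≤ (A ^ q ⊔ Bb ^ q) * volume B := by
    rw [hIeq, ← lintegral_indicator_const measurableSet_closedBall (A ^ q ⊔ Bb ^ q)]
    refine lintegral_mono fun y => ?_
    by_cases hy : y ∈ B
    · rw [Set.indicator_of_mem hy, Set.indicator_of_mem hy]
      exact (ennreal_rpow_bounds hA0 hBbt (hmem y hy).1 (hmem y hy).2 q).2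
    · rw [Set.indicator_of_notMem hy, Set.indicator_of_notMem hy]
  have hlower : (A ^ q ⊓ Bb ^ q) * volume B ≤ I := by
    rw [hIeq, ← lintegral_indicator_const measurableSet_closedBall (A ^ q ⊓ Bb ^ q)]
    refine lintegral_mono fun y => ?_
    by_cases hy : y ∈ B
    · rw [Set.indicator_of_mem hy, Set.indicator_of_mem hy]
      exact (ennreal_rpow_bounds hA0 hBbt (hmem y hy).1 (hmem y hy).2 q).1
    · rw [Set.indicator_of_notMem hy, Set.indicator_of_notMem hy]
  have hinf0 : A ^ q ⊓ Bb ^ q ≠ 0 := by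
    refine (lt_inf_iff.mpr ⟨?_, ?_⟩).ne'
    · exact pos_iff_ne_zero.mpr (ennreal_rpow_ne_zero hA0 hAt q)
    · exact pos_iff_ne_zero.mpr (ennreal_rpow_ne_zero hBb0 hBbt q)
  have hsupt : A ^ q ⊔ Bb ^ q ≠ ⊤ := by
    refine (sup_lt_iff.mpr ⟨?_, ?_⟩).ne
    · exact lt_top_iff_ne_top.mpr (ennreal_rpow_ne_top hA0 hAt q)
    · exact lt_top_iff_ne_top.mpr (ennreal_rpow_ne_top hBb0 hBbt q)
  have hI0 : I ≠ 0 :=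
    (lt_of_lt_of_le (ENNReal.mul_pos hinf0 hvolpos.ne') hlower).ne'
  have hIt : I ≠ ⊤ :=
    (lt_of_le_of_lt hupper (ENNReal.mul_lt_top
      (lt_top_iff_ne_top.mpr hsupt) hvoltop)).ne
  have : wnorm pj lamj (B.indicator fun _ => (1:ℝ≥0∞)) = I ^ (1 / pj) := rfl
  rw [this]
  exact ⟨ennreal_rpow_ne_zero hI0 hIt _, ennreal_rpow_ne_top hI0 hIt _⟩

/-- A necessary condition for the weighted Brascamp–Lieb estimate. -/
theorem necessary_condition (m k N : ℕ) (hm : 0 < m) (hk : 0 < k) (hN : 0 < N)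
    (v : Fin N → Fin m → ℝ) (hv0 : ∀ j, v j ≠ 0) (hvinj : Function.Injective v)
    (hnc : ∀ i j, i ≠ j → ∀ c : ℝ, v i ≠ c • v j)
    (p lam : Fin N → ℝ)
    (hp : ∀ j, 0 ≤ 1 / p j ∧ 1 / p j ≤ 1)
    (C : ℝ≥0∞) (hC : C ≠ ⊤)
    (hbound : ∀ f : Fin N → EuclideanSpace ℝ (Fin k) → ℝ≥0∞, (∀ j, Measurable (f j)) →
      BLform v f ≤ C * ∏ j, wnorm (p j) (lam j) (f j)) :
    ∑ j, (1 / p j + lam j / (k : ℝ)) = (m : ℝ) := by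
  haveI : Nonempty (Fin N) := ⟨⟨0, hN⟩⟩
  haveI : Nonempty (Fin m) := ⟨⟨0, hm⟩⟩
  -- dichotomy for p
  have hpd : ∀ j, p j = 0 ∨ 1 ≤ p j := by
    intro j
    rcases eq_or_ne (p j) 0 with h | h
    · exact Or.inl h
    · right
      have h1 : 0 < 1 / p j := by
        rcases (hp j).1.lt_or_eq with h' | h'
        · exact h'
        · rcases div_eq_zero_iff.mp h'.symm with h'' | h''
          · exact absurd h'' one_ne_zero
          · exact absurd h'' h
      have hpj : 0 < p j := one_div_pos.mp h1
      exact (div_le_one hpj).mp (hp j).2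
  -- a direction `a` on which all the `v j` pair nontrivially
  let φ : Fin N → ((Fin m → ℝ) →ₗ[ℝ] ℝ) := fun j => ∑ i, (v j i) • (LinearMap.proj i)
  have hφ : ∀ j (a : Fin m → ℝ), φ j a = ∑ i, v j i * a i := by
    intro j a
    simp [φ, smul_eq_mul]
  have hφne : ∀ j, φ j ≠ 0 := by
    intro j h
    obtain ⟨i, hi⟩ : ∃ i, v j i ≠ 0 := by
      by_contra hcon; push_neg at hcon; exact hv0 j (funext hcon)
    have h2 := LinearMap.congr_fun h (Pi.single i 1)
    rw [hφ] at h2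
    simp only [LinearMap.zero_apply] at h2
    apply hi
    rw [← h2, Finset.sum_eq_single i]
    · simp
    · intro b _ hb; simp [Pi.single_apply, hb]
    · intro hmem; exact absurd (Finset.mem_univ i) hmem
  obtain ⟨a, ha⟩ : ∃ a : Fin m → ℝ, ∀ j, φ j a ≠ 0 := by
    by_contra hcon
    push_neg at hcon
    have hsub : (Set.univ : Set (Fin m → ℝ)) ⊆
        ⋃ j, (LinearMap.ker (φ j) : Set (Fin m → ℝ)) := by
      intro a _
      obtain ⟨j, hj⟩ := hcon a
      exact Set.mem_iUnion.mpr ⟨j, by simpa [LinearMap.mem_ker] using hj⟩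
    have hnull : volume (⋃ j, (LinearMap.ker (φ j) : Set (Fin m → ℝ))) = 0 :=
      measure_iUnion_null fun j =>
        Measure.addHaar_submodule volume _ (by rw [Ne, LinearMap.ker_eq_top]; exact hφne j)
    have huniv : (0:ℝ≥0∞) < volume (Set.univ : Set (Fin m → ℝ)) :=
      isOpen_univ.measure_pos volume Set.univ_nonempty
    exact huniv.ne' (measure_mono_null hsub hnull)
  set d : Fin N → ℝ := fun j => φ j a with hd
  -- base point and balls
  set e : EuclideanSpace ℝ (Fin k) := EuclideanSpace.single ⟨0, hk⟩ 1 with he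
  have hnorme : ‖e‖ = 1 := by rw [he, EuclideanSpace.norm_single]; norm_num
  set c : Fin N → EuclideanSpace ℝ (Fin k) := fun j => d j • e with hcdef
  have hnormc : ∀ j, ‖c j‖ = |d j| := by
    intro j
    rw [hcdef]
    simp only [norm_smul, hnorme, Real.norm_eq_abs, mul_one]
  set ρ : ℝ := Finset.univ.inf' Finset.univ_nonempty (fun j => |d j|) with hρ
  have hρpos : 0 < ρ := by
    rw [hρ, Finset.lt_inf'_iff]
    exact fun j _ => abs_pos.mpr (ha j)
  have hρle : ∀ j, ρ ≤ |d j| := fun j => Finset.inf'_le _ (Finset.mem_univ j)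
  set r : ℝ := ρ / 2 with hrdef
  have hr : 0 < r := by rw [hrdef]; linarith
  have hrc : ∀ j, 2 * r ≤ ‖c j‖ := by
    intro j; rw [hnormc j, hrdef]; linarith [hρle j]
  set f : Fin N → EuclideanSpace ℝ (Fin k) → ℝ≥0∞ :=
    fun j => (Metric.closedBall (c j) r).indicator (fun _ => (1:ℝ≥0∞)) with hfdef
  have hfmeas : ∀ j, Measurable (f j) :=
    fun j => measurable_const.indicator measurableSet_closedBall
  have hG : Measurable fun x : Fin m → EuclideanSpace ℝ (Fin k) =>
      ∏ j, f j (dotv (v j) x) :=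
    Finset.measurable_prod _ fun j _ => (hfmeas j).comp (measurable_dotv (v j))
  -- the BL form is positive
  set Λ := BLform v f with hΛ
  have hΛpos : 0 < Λ := by
    set U : Set (Fin m → EuclideanSpace ℝ (Fin k)) :=
      ⋂ j, (fun x => dotv (v j) x) ⁻¹' Metric.ball (c j) r with hU
    have hUopen : IsOpen U :=
      isOpen_iInter_of_finite fun j => (Metric.isOpen_ball).preimage (continuous_dotv (v j))
    have hdx₀ : ∀ j, dotv (v j) (fun i => a i • e) = c j := by
      intro j
      rw [hcdef]
      calc dotv (v j) (fun i => a i • e) = ∑ i, (v j i * a i) • e := by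
            simp [dotv, smul_smul]
        _ = (∑ i, v j i * a i) • e := (Finset.sum_smul).symm
        _ = d j • e := by simp only [hd]; rw [hφ]
    have hx₀U : (fun i => a i • e) ∈ U := by
      rw [hU, Set.mem_iInter]
      intro j
      simp only [Set.mem_preimage, hdx₀ j]
      exact Metric.mem_ball_self hr
    have hbound1 : ∀ x, U.indicator (fun _ => (1:ℝ≥0∞)) x ≤ ∏ j, f j (dotv (v j) x) := by
      intro x
      by_cases hx : x ∈ U
      · rw [Set.indicator_of_mem hx]
        have h1 : ∀ j ∈ Finset.univ, f j (dotv (v j) x) = 1 := by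
          intro j _
          rw [hfdef]
          exact Set.indicator_of_mem
            (Metric.ball_subset_closedBall (Set.mem_iInter.mp hx j)) _
        rw [Finset.prod_congr rfl h1, Finset.prod_const_one]
      · rw [Set.indicator_of_notMem hx]; exact zero_le
    calc (0:ℝ≥0∞) < volume U := hUopen.measure_pos volume ⟨_, hx₀U⟩
      _ = ∫⁻ x, U.indicator (fun _ => (1:ℝ≥0∞)) x := by
          rw [lintegral_indicator hUopen.measurableSet, setLIntegral_one]
      _ ≤ Λ := lintegral_mono hbound1
  -- weighted norms of the test functions are nondegenerate
  have hW : ∀ j, wnorm (p j) (lam j) (f j) ≠ 0 ∧ wnorm (p j) (lam j) (f j) ≠ ⊤ := by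
    intro j
    rcases hpd j with h0 | h1
    · rw [h0, wnorm_p_zero]
      exact ⟨one_ne_zero, ENNReal.one_ne_top⟩
    · exact wnorm_indicator_bounds h1 hr (hrc j)
  set P := ∏ j, wnorm (p j) (lam j) (f j) with hP
  have hPt : P ≠ ⊤ := ENNReal.prod_ne_top fun j _ => (hW j).2
  have hCPt : C * P ≠ ⊤ := ENNReal.mul_ne_top hC hPt
  -- Case A : some exponent is zero (in the Lean sense `p j = 0`); contradiction.
  by_cases hzero : ∃ j₀, p j₀ = 0
  · exfalso
    obtain ⟨j₀, hj₀⟩ := hzero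
    set f' : Fin N → EuclideanSpace ℝ (Fin k) → ℝ≥0∞ :=
      fun j y => (if j = j₀ then (⊤:ℝ≥0∞) else 1) * f j y with hf'
    have hf'meas : ∀ j, Measurable (f' j) := fun j => (hfmeas j).const_mul _
    have hb := hbound f' hf'meas
    have hLHS : BLform v f' = ⊤ := by
      have h2 : BLform v f' = ∫⁻ x : Fin m → EuclideanSpace ℝ (Fin k),
          ⊤ * ∏ j, f j (dotv (v j) x) := by
        unfold BLform
        refine lintegral_congr fun x => ?_
        rw [hf']
        rw [Finset.prod_mul_distrib]
        congr 1
        rw [Finset.prod_ite_eq' Finset.univ j₀ (fun _ => (⊤:ℝ≥0∞))]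
        simp
      rw [h2, lintegral_const_mul _ hG]
      exact ENNReal.top_mul hΛpos.ne'
    have hRHS : ∀ j, wnorm (p j) (lam j) (f' j) ≠ ⊤ := by
      intro j
      rcases hpd j with h0 | h1
      · rw [h0, wnorm_p_zero]; exact ENNReal.one_ne_top
      · have hjne : j ≠ j₀ := by
          intro h; rw [h, hj₀] at h1; linarith
        have hfj : f' j = f j := by
          funext y; rw [hf']; simp [if_neg hjne]
        rw [hfj]; exact (hW j).2
    have hfin : C * ∏ j, wnorm (p j) (lam j) (f' j) ≠ ⊤ :=
      ENNReal.mul_ne_top hC (ENNReal.prod_ne_top fun j _ => hRHS j)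
    rw [hLHS] at hb
    exact hfin (top_le_iff.mp hb)
  -- Case B : all exponents satisfy `1 ≤ p j`; scaling argument.
  push_neg at hzero
  have hge : ∀ j, 1 ≤ p j := fun j => (hpd j).resolve_left (hzero j)
  have hΛt : Λ ≠ ⊤ := by
    have hb := hbound f hfmeas
    exact (lt_of_le_of_lt hb (lt_top_iff_ne_top.mpr hCPt)).ne
  set S : ℝ := ∑ j, (lam j + (k:ℝ) / p j) with hS
  have hmain : ∀ t : ℝ, 0 < t →
      Λ.toReal ≤ (C * P).toReal * t ^ (((m * k : ℕ) : ℝ) - S) := by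
    intro t ht
    set T := ENNReal.ofReal t with hT
    have hT0 : T ≠ 0 := by simp [hT, ENNReal.ofReal_eq_zero, not_le, ht]
    have hTt : T ≠ ⊤ := ENNReal.ofReal_ne_top
    have hb := hbound (fun j y => f j (t • y))
      (fun j => (hfmeas j).comp (measurable_const_smul t))
    rw [BLform_scale v f hfmeas ht] at hb
    have hws : (∏ j, wnorm (p j) (lam j) (fun y => f j (t • y)))
        = T ^ (-S) * P := by
      calc ∏ j, wnorm (p j) (lam j) (fun y => f j (t • y))
          = ∏ j, (T ^ (-(lam j + (k:ℝ) / p j)) * wnorm (p j) (lam j) (f j)) :=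
            Finset.prod_congr rfl fun j _ => wnorm_scale (hge j) (hfmeas j) ht
        _ = (∏ j, T ^ (-(lam j + (k:ℝ) / p j))) * P := Finset.prod_mul_distrib
        _ = T ^ (-S) * P := by
            rw [← ennreal_rpow_sum Finset.univ hT0 hTt, hS, ← Finset.sum_neg_distrib]
    rw [hws] at hb
    have h1 : Λ ≤ (C * P) * T ^ (((m * k : ℕ) : ℝ) - S) := by
      calc Λ = T ^ ((m * k : ℕ) : ℝ) * (T ^ (-((m * k : ℕ) : ℝ)) * Λ) := by
            rw [← mul_assoc, ← ENNReal.rpow_add _ _ hT0 hTt, add_neg_cancel,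
              ENNReal.rpow_zero, one_mul]
        _ ≤ T ^ ((m * k : ℕ) : ℝ) * (C * (T ^ (-S) * P)) := mul_le_mul_right hb _
        _ = (C * P) * (T ^ ((m * k : ℕ) : ℝ) * T ^ (-S)) := by ring
        _ = (C * P) * T ^ (((m * k : ℕ) : ℝ) - S) := by
            rw [← ENNReal.rpow_add _ _ hT0 hTt, ← sub_eq_add_neg]
    have hTa : T ^ (((m * k : ℕ) : ℝ) - S) = ENNReal.ofReal (t ^ (((m * k : ℕ) : ℝ) - S)) := by
      rw [hT, ENNReal.ofReal_rpow_of_pos ht]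
    have hRt : (C * P) * T ^ (((m * k : ℕ) : ℝ) - S) ≠ ⊤ :=
      ENNReal.mul_ne_top hCPt (by rw [hTa]; exact ENNReal.ofReal_ne_top)
    have h2 := ENNReal.toReal_mono hRt h1
    rw [ENNReal.toReal_mul, hTa, ENNReal.toReal_ofReal (Real.rpow_nonneg ht.le _)] at h2
    exact h2
  have ha0 : ((m * k : ℕ) : ℝ) - S = 0 :=
    exponent_eq_zero (ENNReal.toReal_pos hΛpos.ne' hΛt) ENNReal.toReal_nonneg hmain
  have hSmk : S = (m:ℝ) * (k:ℝ) := by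
    have h3 := sub_eq_zero.mp ha0
    rw [← h3]; push_cast; ring
  have hk0 : (k:ℝ) ≠ 0 := Nat.cast_ne_zero.mpr hk.ne'
  have hsum : ∑ j, (1 / p j + lam j / (k:ℝ)) = S / k := by
    rw [hS, Finset.sum_div]
    refine Finset.sum_congr rfl fun j _ => ?_
    have hpj : p j ≠ 0 := by have := hge j; intro hctr; rw [hctr] at this; linarith
    field_simp
    ring
  rw [hsum, hSmk, mul_div_assoc, div_self hk0, mul_one]
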